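/- Let N ≥ 1 and let S > 0 and σ > 0. Let τx_0,…,τx_{N−1}, τy_0,…,τy_{N−1} be 2N independent real random variables, each with law gaussianReal 0 (S²σ²/2), and set τ_k = τx_k + i·τy_k ∈ ℂ. Then for every index j ∈ {0,…,N−1}, the law of Re((F⁻¹ τ)_j) is gaussianReal 0 (S²σ²/2), and the law of Im((F⁻¹ τ)_j) is gaussianReal 0 (S²σ²/2). -/

import Mathlib

open MeasureTheory ProbabilityTheory

open scoped NNReal ENNReal

noncomputable def rotMap (a b : ℝ) : (ℝ × ℝ) →ₗ[ℝ] ℝ × ℝ where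
  toFun := fun p => (a * p.1 + b * p.2, -b * p.1 + a * p.2)
  map_add' := by intro p q; simp [Prod.ext_iff]; constructor <;> ring
  map_smul' := by intro c p; simp [Prod.ext_iff, smul_eq_mul]; constructor <;> ring

lemma rotMap_det (a b : ℝ) : LinearMap.det (rotMap a b) = a ^ 2 + b ^ 2 := by
  have hb := Module.Basis.finTwoProd ℝ
  rw [← LinearMap.det_toMatrix (Module.Basis.finTwoProd ℝ)]
  have : LinearMap.toMatrix (Module.Basis.finTwoProd ℝ) (Module.Basis.finTwoProd ℝ) (rotMap a b)
      = !![a, b; -b, a] := by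
    ext i j
    fin_cases i <;> fin_cases j <;>
      simp [LinearMap.toMatrix_apply, rotMap, Module.Basis.finTwoProd]
  rw [this, Matrix.det_fin_two_of]
  ring

lemma rotMap_measurable (a b : ℝ) : Measurable (rotMap a b) :=
  (rotMap a b).continuous_of_finiteDimensional.measurable

lemma map_rot_volume (a b : ℝ) (hab : a ^ 2 + b ^ 2 = 1) :
    Measure.map (rotMap a b) (volume : Measure (ℝ × ℝ)) = volume := by
  rw [Measure.map_linearMap_addHaar_eq_smul_addHaar _ (by rw [rotMap_det, hab]; norm_num)]
  simp [rotMap_det, hab]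

lemma prod_gauss (v : ℝ≥0) (hv : v ≠ 0) :
    (gaussianReal 0 v).prod (gaussianReal 0 v)
      = (volume : Measure (ℝ × ℝ)).withDensity
          (fun p => gaussianPDF 0 v p.1 * gaussianPDF 0 v p.2) := by
  apply Measure.prod_eq
  intro s t hs ht
  rw [withDensity_apply _ (hs.prod ht), Measure.volume_eq_prod, ← Measure.prod_restrict,
    lintegral_prod_mul ((measurable_gaussianPDF 0 v).aemeasurable)
      ((measurable_gaussianPDF 0 v).aemeasurable),
    gaussianReal_of_var_ne_zero 0 hv, withDensity_apply _ hs, withDensity_apply _ ht]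

lemma map_withDensity_comp {α β : Type*} [MeasurableSpace α] [MeasurableSpace β]
    {f : α → β} (hf : Measurable f) {g : β → ℝ≥0∞} (hg : Measurable g) (μ : Measure α) :
    Measure.map f (μ.withDensity (fun x => g (f x))) = (Measure.map f μ).withDensity g := by
  ext s hs
  rw [Measure.map_apply hf hs, withDensity_apply _ (hf hs), withDensity_apply _ hs,
    setLIntegral_map hs hg hf]

lemma map_rot_gauss (v : ℝ≥0) (hv : v ≠ 0) (a b : ℝ) (hab : a ^ 2 + b ^ 2 = 1) :
    Measure.map (rotMap a b) ((gaussianReal 0 v).prod (gaussianReal 0 v))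
      = (gaussianReal 0 v).prod (gaussianReal 0 v) := by
  rw [prod_gauss v hv]
  have hcomp : (fun p : ℝ × ℝ => gaussianPDF 0 v (rotMap a b p).1
        * gaussianPDF 0 v (rotMap a b p).2)
      = fun p => gaussianPDF 0 v p.1 * gaussianPDF 0 v p.2 := by
    funext p
    obtain ⟨x, y⟩ := p
    simp only [rotMap, LinearMap.coe_mk, AddHom.coe_mk, gaussianPDF]
    rw [← ENNReal.ofReal_mul (gaussianPDFReal_nonneg _ _ _),
      ← ENNReal.ofReal_mul (gaussianPDFReal_nonneg _ _ _)]
    congr 1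
    simp only [gaussianPDFReal, sub_zero]
    rw [mul_mul_mul_comm, ← Real.exp_add, mul_mul_mul_comm, ← Real.exp_add]
    congr 2
    rw [← add_div, ← add_div]
    congr 1
    linear_combination (-(x ^ 2) - y ^ 2) * hab
  conv_lhs => rw [← hcomp]
  rw [map_withDensity_comp (rotMap_measurable a b)
      (g := fun p : ℝ × ℝ => gaussianPDF 0 v p.1 * gaussianPDF 0 v p.2)
      (((measurable_gaussianPDF 0 v).comp measurable_fst).mul
        ((measurable_gaussianPDF 0 v).comp measurable_snd)),
    map_rot_volume a b hab]

lemma map_lin_gauss (v : ℝ≥0) (a b : ℝ) :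
    Measure.map (fun p : ℝ × ℝ => a * p.1 + b * p.2)
        ((gaussianReal 0 v).prod (gaussianReal 0 v))
      = gaussianReal 0 ((a ^ 2 + b ^ 2).toNNReal * v) := by
  by_cases hv : v = 0
  · subst hv
    simp only [gaussianReal_zero_var, mul_zero]
    rw [Measure.dirac_prod_dirac, Measure.map_dirac' (by fun_prop)]
    norm_num
  by_cases hab : a ^ 2 + b ^ 2 = 0
  · have ha : a = 0 := by nlinarith [sq_nonneg a, sq_nonneg b]
    have hb : b = 0 := by nlinarith [sq_nonneg a, sq_nonneg b]
    subst ha; subst hb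
    simp only [zero_mul, add_zero, zero_add]
    rw [Measure.map_const, measure_univ, one_smul]
    norm_num
  · have hr : 0 < a ^ 2 + b ^ 2 := lt_of_le_of_ne (by positivity) (Ne.symm hab)
    set r := Real.sqrt (a ^ 2 + b ^ 2) with hrdef
    have hr0 : 0 < r := Real.sqrt_pos.mpr hr
    have hr2 : r ^ 2 = a ^ 2 + b ^ 2 := Real.sq_sqrt hr.le
    have hab1 : (a / r) ^ 2 + (b / r) ^ 2 = 1 := by
      field_simp
      linarith [hr2]
    have hfeq : (fun p : ℝ × ℝ => a * p.1 + b * p.2)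
        = (fun x : ℝ => r * x) ∘ Prod.fst ∘ (rotMap (a / r) (b / r)) := by
      funext p
      simp only [Function.comp_apply, rotMap, LinearMap.coe_mk, AddHom.coe_mk]
      field_simp
    rw [hfeq, ← Measure.map_map (by fun_prop) (by fun_prop),
      ← Measure.map_map (by fun_prop) (rotMap_measurable _ _),
      map_rot_gauss v hv _ _ hab1, Measure.map_fst_prod, measure_univ, one_smul,
      gaussianReal_map_const_mul]
    congr 1
    · simp
    · congr 1
      ext
      simp [hr2, Real.toNNReal, hr.le]

lemma map_add_gauss (v1 v2 : ℝ≥0) :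
    Measure.map (fun p : ℝ × ℝ => p.1 + p.2)
        ((gaussianReal 0 v1).prod (gaussianReal 0 v2))
      = gaussianReal 0 (v1 + v2) := by
  by_cases hv : v1 + v2 = 0
  · have h1 : v1 = 0 := by
      have := add_eq_zero.mp hv; exact this.1
    have h2 : v2 = 0 := (add_eq_zero.mp hv).2
    subst h1; subst h2
    simp only [gaussianReal_zero_var, add_zero]
    rw [Measure.dirac_prod_dirac, Measure.map_dirac' (by fun_prop)]
    norm_num
  · set v := v1 + v2 with hvdef
    have hvpos : 0 < (v : ℝ) := by positivity
    set a := Real.sqrt ((v1 : ℝ) / v) with hadef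
    set b := Real.sqrt ((v2 : ℝ) / v) with hbdef
    have ha2 : a ^ 2 = (v1 : ℝ) / v := Real.sq_sqrt (by positivity)
    have hb2 : b ^ 2 = (v2 : ℝ) / v := Real.sq_sqrt (by positivity)
    have h1 : gaussianReal 0 v1 = (gaussianReal 0 v).map (a * ·) := by
      rw [gaussianReal_map_const_mul]
      congr 1
      · simp
      · rw [show (NNReal.mk (a ^ 2) (sq_nonneg a) : ℝ≥0) = v1 / v by ext; simp [ha2],
          div_mul_cancel₀ _ hv]
    have h2 : gaussianReal 0 v2 = (gaussianReal 0 v).map (b * ·) := by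
      rw [gaussianReal_map_const_mul]
      congr 1
      · simp
      · rw [show (NNReal.mk (b ^ 2) (sq_nonneg b) : ℝ≥0) = v2 / v by ext; simp [hb2],
          div_mul_cancel₀ _ hv]
    rw [h1, h2, Measure.map_prod_map _ _ (by fun_prop) (by fun_prop),
      Measure.map_map (by fun_prop) (by fun_prop)]
    have : ((fun p : ℝ × ℝ => p.1 + p.2) ∘ Prod.map (a * ·) (b * ·))
        = fun p : ℝ × ℝ => a * p.1 + b * p.2 := rfl
    rw [this, map_lin_gauss]
    congr 1
    rw [show a ^ 2 + b ^ 2 = ((v : ℝ))⁻¹ * ((v1 : ℝ) + v2) by rw [ha2, hb2]; ring]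
    rw [show ((v1 : ℝ) + v2) = (v : ℝ) by push_cast [hvdef]; ring, inv_mul_cancel₀ hvpos.ne']
    simp

lemma map_sum_gauss (v : ℝ≥0) : ∀ (n : ℕ) (w : Fin n → ℝ × ℝ),
    Measure.map (fun τ : Fin n → ℝ × ℝ =>
        ∑ k, ((w k).1 * (τ k).1 + (w k).2 * (τ k).2))
      (Measure.pi fun _ => (gaussianReal 0 v).prod (gaussianReal 0 v))
    = gaussianReal 0 ((∑ k, ((w k).1 ^ 2 + (w k).2 ^ 2)).toNNReal * v) := by
  intro n
  induction n with
  | zero =>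
    intro w
    simp only [Finset.univ_eq_empty, Finset.sum_empty]
    rw [Measure.map_const, measure_univ, one_smul]
    norm_num
  | succ n ih =>
    intro w
    set μ2 : Measure (ℝ × ℝ) := (gaussianReal 0 v).prod (gaussianReal 0 v) with hμ2
    have hmp := measurePreserving_piFinSuccAbove (fun _ : Fin (n + 1) => μ2) 0
    set e := MeasurableEquiv.piFinSuccAbove (fun _ : Fin (n + 1) => ℝ × ℝ) 0 with he
    have hpi : (Measure.pi fun _ : Fin (n + 1) => μ2)
        = Measure.map e.symm (μ2.prod (Measure.pi fun _ : Fin n => μ2)) :=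
      (hmp.symm e).map_eq.symm
    rw [hpi, Measure.map_map (by fun_prop) e.symm.measurable]
    have hfeq : ((fun τ : Fin (n + 1) → ℝ × ℝ =>
          ∑ k, ((w k).1 * (τ k).1 + (w k).2 * (τ k).2)) ∘ e.symm)
        = (fun q : ℝ × ℝ => q.1 + q.2) ∘
            (Prod.map (fun x : ℝ × ℝ => (w 0).1 * x.1 + (w 0).2 * x.2)
              (fun τ : Fin n → ℝ × ℝ =>
                ∑ k, ((w k.succ).1 * (τ k).1 + ((w k.succ).2 * (τ k).2)))) := by
      funext q
      obtain ⟨x, τ⟩ := q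
      simp only [Function.comp_apply, Prod.map_apply, he,
        MeasurableEquiv.piFinSuccAbove_symm_apply, Fin.insertNth_zero]
      rw [Fin.sum_univ_succ]
      simp [Fin.cons_zero, Fin.cons_succ]
    rw [hfeq, ← Measure.map_map (by fun_prop) (by fun_prop),
      ← Measure.map_prod_map _ _ (by fun_prop) (by fun_prop),
      map_lin_gauss, ih (fun k => w k.succ), map_add_gauss]
    congr 1
    rw [Fin.sum_univ_succ,
      Real.toNNReal_add (by positivity) (Finset.sum_nonneg fun k _ => by positivity),
      add_mul]

/-- The inverse unitary discrete Fourier transform on `ℂ^N`. -/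
noncomputable def idft {N : ℕ} (z : Fin N → ℂ) : Fin N → ℂ := fun n =>
  (1 / (Real.sqrt N : ℂ)) *
    ∑ i : Fin N, z i * Complex.exp ((2 * (Real.pi : ℂ) * Complex.I * (i : ℕ) * (n : ℕ)) / N)

/-- Key distributional claim in the proof of Theorem 1: the inverse Fourier transform of a
vector of i.i.d. circularly symmetric complex Gaussian noise (real and imaginary parts each
of variance `S²σ²/2`) has, in each coordinate, real and imaginary parts each distributed as
a centered real Gaussian of variance `S²σ²/2`. -/
theorem gredp_noise_idft (N : ℕ) (hN : 1 ≤ N) (S σ : ℝ) (hS : 0 < S) (hσ : 0 < σ)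
    (j : Fin N) :
    Measure.map
      (fun τ : Fin N → ℝ × ℝ =>
        (idft (fun k => (((τ k).1 : ℂ) + Complex.I * ((τ k).2 : ℂ))) j).re)
      (Measure.pi (fun _ : Fin N =>
        (gaussianReal 0 ((S ^ 2 * σ ^ 2 / 2).toNNReal)).prod
          (gaussianReal 0 ((S ^ 2 * σ ^ 2 / 2).toNNReal))))
      = gaussianReal 0 ((S ^ 2 * σ ^ 2 / 2).toNNReal) ∧
    Measure.map
      (fun τ : Fin N → ℝ × ℝ =>
        (idft (fun k => (((τ k).1 : ℂ) + Complex.I * ((τ k).2 : ℂ))) j).im)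
      (Measure.pi (fun _ : Fin N =>
        (gaussianReal 0 ((S ^ 2 * σ ^ 2 / 2).toNNReal)).prod
          (gaussianReal 0 ((S ^ 2 * σ ^ 2 / 2).toNNReal))))
      = gaussianReal 0 ((S ^ 2 * σ ^ 2 / 2).toNNReal) := by
  have hN0 : (N : ℝ) ≠ 0 := Nat.cast_ne_zero.mpr (Nat.one_le_iff_ne_zero.mp hN)
  have hNpos : (0 : ℝ) < N := by positivity
  set v : ℝ≥0 := (S ^ 2 * σ ^ 2 / 2).toNNReal with hv
  set θ : Fin N → ℝ := fun i => 2 * Real.pi * i * j / N with hθ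
  have hexp : ∀ i : Fin N,
      (2 * (Real.pi : ℂ) * Complex.I * (i : ℕ) * (j : ℕ)) / N = ((θ i : ℝ) : ℂ) * Complex.I := by
    intro i
    simp only [hθ]
    push_cast
    ring
  have hsqrt : Real.sqrt N ^ 2 = N := Real.sq_sqrt (Nat.cast_nonneg N)
  have hterm : ∀ (x y c : ℝ),
      (((x : ℂ) + Complex.I * (y : ℂ)) * (Complex.cos (c : ℂ) + Complex.sin (c : ℂ) * Complex.I))
        = ((x * Real.cos c - y * Real.sin c : ℝ) : ℂ)
          + Complex.I * ((x * Real.sin c + y * Real.cos c : ℝ) : ℂ) := by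
    intro x y c
    rw [show (Complex.cos (c : ℂ)) = ((Real.cos c : ℝ) : ℂ) by rw [Complex.ofReal_cos],
      show (Complex.sin (c : ℂ)) = ((Real.sin c : ℝ) : ℂ) by rw [Complex.ofReal_sin]]
    push_cast
    ring_nf
    simp [Complex.I_sq]
    ring
  have hidft : ∀ τ : Fin N → ℝ × ℝ,
      idft (fun k => (((τ k).1 : ℂ) + Complex.I * ((τ k).2 : ℂ))) j
        = ((∑ k, ((τ k).1 * Real.cos (θ k) - (τ k).2 * Real.sin (θ k)) / Real.sqrt N : ℝ) : ℂ)
          + Complex.I *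
            ((∑ k, ((τ k).1 * Real.sin (θ k) + (τ k).2 * Real.cos (θ k)) / Real.sqrt N : ℝ) : ℂ) := by
    intro τ
    simp only [idft, hexp, Complex.exp_mul_I, hterm]
    push_cast
    rw [Finset.mul_sum]
    simp only [mul_add]
    rw [Finset.sum_add_distrib]
    congr 1
    · exact Finset.sum_congr rfl fun k _ => by ring
    · rw [Finset.mul_sum]
      exact Finset.sum_congr rfl fun k _ => by ring
  have hcoef : ∀ (f g : Fin N → ℝ), (∀ k, f k ^ 2 + g k ^ 2 = 1) →
      (∑ k : Fin N, ((f k / Real.sqrt N) ^ 2 + (g k / Real.sqrt N) ^ 2)) = 1 := by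
    intro f g hfg
    have : ∀ k : Fin N, (f k / Real.sqrt N) ^ 2 + (g k / Real.sqrt N) ^ 2 = 1 / N := by
      intro k
      rw [div_pow, div_pow, hsqrt, ← add_div, hfg k]
    rw [Finset.sum_congr rfl fun k _ => this k, Finset.sum_const, Finset.card_univ,
      Fintype.card_fin, nsmul_eq_mul, mul_one_div, div_self hN0]
  constructor
  · have hfun : (fun τ : Fin N → ℝ × ℝ =>
        (idft (fun k => (((τ k).1 : ℂ) + Complex.I * ((τ k).2 : ℂ))) j).re)
        = fun τ : Fin N → ℝ × ℝ => ∑ k, ((Real.cos (θ k) / Real.sqrt N) * (τ k).1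
            + (-Real.sin (θ k) / Real.sqrt N) * (τ k).2) := by
      funext τ
      rw [hidft τ]
      simp only [Complex.add_re, Complex.ofReal_re, Complex.mul_re, Complex.I_re, Complex.I_im,
        Complex.ofReal_im]
      ring_nf
      apply Finset.sum_congr rfl
      intro k _
      ring
    have hmap := map_sum_gauss v N
      (fun k => (Real.cos (θ k) / Real.sqrt N, -Real.sin (θ k) / Real.sqrt N))
    dsimp only at hmap
    rw [hfun, hmap,
      hcoef _ _ (fun k => by
        rw [neg_sq]
        exact Real.cos_sq_add_sin_sq (θ k))]
    norm_num
  · have hfun : (fun τ : Fin N → ℝ × ℝ =>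
        (idft (fun k => (((τ k).1 : ℂ) + Complex.I * ((τ k).2 : ℂ))) j).im)
        = fun τ : Fin N → ℝ × ℝ => ∑ k, ((Real.sin (θ k) / Real.sqrt N) * (τ k).1
            + (Real.cos (θ k) / Real.sqrt N) * (τ k).2) := by
      funext τ
      rw [hidft τ]
      simp only [Complex.add_im, Complex.ofReal_im, Complex.mul_im, Complex.I_re, Complex.I_im,
        Complex.ofReal_re]
      ring_nf
      apply Finset.sum_congr rfl
      intro k _
      ring
    have hmap := map_sum_gauss v N
      (fun k => (Real.sin (θ k) / Real.sqrt N, Real.cos (θ k) / Real.sqrt N))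
    dsimp only at hmap
    rw [hfun, hmap, hcoef _ _ (fun k => Real.sin_sq_add_cos_sq (θ k))]
    norm_num
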